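/- Let A: Z^5 → Z^8 be the map with matrix having rows (1,0,0,0,1),(0,1,0,0,1),(0,0,1,0,1),(0,0,0,1,1),(1,1,0,0,0),(0,1,1,0,0),(0,0,1,1,0),(1,0,0,1,0). Then the cokernel of A is isomorphic to Z^3 ⊕ Z/2. -/

import Mathlib

/-- The matrix of the Khovanov differential `d : C^{-4,-7}(8_18) → C^{-3,-7}(8_18)`
in the bases of states `v_1,…,v_5` and `w_1,…,w_4,u_1,…,u_4`. -/
def M818 : Matrix (Fin 8) (Fin 5) ℤ :=
  !![1,0,0,0,1;
     0,1,0,0,1;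
     0,0,1,0,1;
     0,0,0,1,1;
     1,1,0,0,0;
     0,1,1,0,0;
     0,0,1,1,0;
     1,0,0,1,0]

namespace Kh818

def P : Matrix (Fin 8) (Fin 8) ℤ :=
  !![1,0,0,0,0,0,0,0;
     0,1,0,0,0,0,0,0;
     0,0,1,0,0,0,0,0;
     0,0,0,1,0,0,0,0;
     1,1,0,0,-1,0,0,0;
     1,0,-1,0,-1,1,0,0;
     1,1,-1,-1,-1,0,1,0;
     0,1,0,-1,-1,0,0,1]

def Pinv : Matrix (Fin 8) (Fin 8) ℤ :=
  !![1,0,0,0,0,0,0,0;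
     0,1,0,0,0,0,0,0;
     0,0,1,0,0,0,0,0;
     0,0,0,1,0,0,0,0;
     1,1,0,0,-1,0,0,0;
     0,1,1,0,-1,1,0,0;
     0,0,1,1,-1,0,1,0;
     1,0,0,1,-1,0,0,1]

def Q : Matrix (Fin 5) (Fin 5) ℤ :=
  !![1,0,0,0,-1;
     0,1,0,0,-1;
     0,0,1,0,-1;
     0,0,0,1,-1;
     0,0,0,0,1]

def Qinv : Matrix (Fin 5) (Fin 5) ℤ :=
  !![1,0,0,0,1;
     0,1,0,0,1;
     0,0,1,0,1;
     0,0,0,1,1;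
     0,0,0,0,1]

def D : Matrix (Fin 8) (Fin 5) ℤ :=
  !![1,0,0,0,0;
     0,1,0,0,0;
     0,0,1,0,0;
     0,0,0,1,0;
     0,0,0,0,2;
     0,0,0,0,0;
     0,0,0,0,0;
     0,0,0,0,0]

lemma PPinv : P * Pinv = 1 := by decide
lemma PinvP : Pinv * P = 1 := by decide
lemma QinvQ : Qinv * Q = 1 := by decide
lemma PM : P * M818 = D * Qinv := by decide

lemma fs3 : (Fin.succ 2 : Fin 5) = 3 := rfl
lemma fs4 : ((2 : Fin 3).succ.succ : Fin 5) = 4 := rfl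

lemma v8_4 {α : Type*} (a b c d e f g h : α) : ![a,b,c,d,e,f,g,h] 4 = e := rfl
lemma v8_5 {α : Type*} (a b c d e f g h : α) : ![a,b,c,d,e,f,g,h] 5 = f := rfl
lemma v8_6 {α : Type*} (a b c d e f g h : α) : ![a,b,c,d,e,f,g,h] 6 = g := rfl
lemma v8_7 {α : Type*} (a b c d e f g h : α) : ![a,b,c,d,e,f,g,h] 7 = h := rfl

lemma Dmul (v : Fin 5 → ℤ) :
    D.mulVecLin v = ![v 0, v 1, v 2, v 3, 2 * v 4, 0, 0, 0] := by
  show D.mulVec v = _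
  simp [D, Matrix.cons_mulVec, Matrix.cons_dotProduct, Matrix.empty_mulVec,
    Matrix.dotProduct_of_isEmpty, Fin.cons_inj, Matrix.vecHead, Matrix.vecTail, fs3, fs4]

def Pequiv : (Fin 8 → ℤ) ≃ₗ[ℤ] (Fin 8 → ℤ) :=
  LinearEquiv.ofLinear P.mulVecLin Pinv.mulVecLin
    (by rw [← Matrix.mulVecLin_mul, PPinv, Matrix.mulVecLin_one])
    (by rw [← Matrix.mulVecLin_mul, PinvP, Matrix.mulVecLin_one])

lemma hrange :
    (LinearMap.range M818.mulVecLin).map (Pequiv.toLinearMap) =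
      LinearMap.range D.mulVecLin := by
  rw [← LinearMap.range_comp]
  have h1 : (Pequiv.toLinearMap ∘ₗ M818.mulVecLin) =
      D.mulVecLin ∘ₗ Qinv.mulVecLin := by
    show P.mulVecLin ∘ₗ M818.mulVecLin = _
    rw [← Matrix.mulVecLin_mul, ← Matrix.mulVecLin_mul, PM]
  rw [h1, LinearMap.range_comp]
  have h2 : LinearMap.range Qinv.mulVecLin = ⊤ := by
    rw [LinearMap.range_eq_top]
    intro y
    refine ⟨Q.mulVecLin y, ?_⟩
    simp only [Matrix.mulVecLin_apply, Matrix.mulVec_mulVec, QinvQ, Matrix.one_mulVec]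
  rw [h2, Submodule.map_top]

def phi : (Fin 8 → ℤ) →ₗ[ℤ] ((Fin 3 → ℤ) × ZMod 2) where
  toFun x := (![x 5, x 6, x 7], (x 4 : ZMod 2))
  map_add' x y := by
    refine Prod.ext ?_ ?_
    · funext i
      fin_cases i <;> simp
    · simp
  map_smul' c x := by
    refine Prod.ext ?_ ?_
    · funext i
      fin_cases i <;> simp
    · simp [zsmul_eq_mul]

lemma hker : LinearMap.ker phi = LinearMap.range D.mulVecLin := by
  ext x
  constructor
  · intro hx
    rw [LinearMap.mem_ker] at hx
    have h1 : (![x 5, x 6, x 7] : Fin 3 → ℤ) = 0 := congrArg Prod.fst hx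
    have h5 : x 5 = 0 := congrFun h1 0
    have h6 : x 6 = 0 := congrFun h1 1
    have h7 : x 7 = 0 := congrFun h1 2
    have h4 : ((x 4 : ℤ) : ZMod 2) = 0 := congrArg Prod.snd hx
    rw [ZMod.intCast_zmod_eq_zero_iff_dvd] at h4
    obtain ⟨k, hk⟩ := h4
    refine ⟨![x 0, x 1, x 2, x 3, k], ?_⟩
    rw [Dmul]
    funext i
    fin_cases i <;>
      simp [v8_4, v8_5, v8_6, v8_7, fs3, fs4] <;>
      first
        | rfl
        | (try exact h5.symm) <;> (try exact h6.symm) <;> (try exact h7.symm) <;>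
            omega
  · rintro ⟨v, rfl⟩
    rw [LinearMap.mem_ker, Dmul]
    refine Prod.ext ?_ ?_
    · show (![_, _, _] : Fin 3 → ℤ) = 0
      funext i
      fin_cases i <;> simp [phi, v8_5, v8_6, v8_7]
    · show ((![v 0, v 1, v 2, v 3, 2 * v 4, 0, 0, 0] 4 : ℤ) : ZMod 2) = 0
      rw [v8_4]
      push_cast
      rw [show ((2 : ZMod 2)) = 0 from rfl]
      ring

lemma hsurj : Function.Surjective phi := by
  rintro ⟨a, z⟩
  refine ⟨![0, 0, 0, 0, (z.val : ℤ), a 0, a 1, a 2], ?_⟩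
  refine Prod.ext ?_ ?_
  · funext i
    fin_cases i <;> simp [phi, v8_5, v8_6, v8_7]
  · show (((z.val : ℤ) : ZMod 2)) = z
    push_cast
    simp [ZMod.natCast_val, ZMod.cast_id]

end Kh818

/-- The cokernel of the Khovanov differential of `8_18`, i.e. the homology group
`H^{-3,-7}(8_18)`, is isomorphic to `ℤ³ ⊕ ℤ/2`. -/
theorem khovanov_cokernel_8_18 :
    Nonempty (((Fin 8 → ℤ) ⧸ LinearMap.range M818.mulVecLin) ≃ₗ[ℤ]
      ((Fin 3 → ℤ) × ZMod 2)) := by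
  refine ⟨?_⟩
  have e1 : ((Fin 8 → ℤ) ⧸ LinearMap.range M818.mulVecLin) ≃ₗ[ℤ]
      ((Fin 8 → ℤ) ⧸ LinearMap.range Kh818.D.mulVecLin) :=
    Submodule.Quotient.equiv _ _ Kh818.Pequiv Kh818.hrange
  have e2 : ((Fin 8 → ℤ) ⧸ LinearMap.range Kh818.D.mulVecLin) ≃ₗ[ℤ]
      ((Fin 3 → ℤ) × ZMod 2) :=
    (Submodule.quotEquivOfEq _ _ Kh818.hker.symm).trans
      (Kh818.phi.quotKerEquivOfSurjective Kh818.hsurj)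
  exact e1.trans e2
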